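/- Let s, t > 1 be odd integers with gcd(s, t) = 1. Then the number of ordered pairs ((k, ℓ), (k', ℓ')) of elements of ZMod s × ZMod t with (k, ℓ) ≠ (k', ℓ') such that the graph D_{k,ℓ} ⊔ D_{k',ℓ'} contains a Hamiltonian path equals (s * φ(s)) * (t * φ(t)). (Hence the family {D_{k,ℓ}} contains 2 · (s·φ(s)/2) · (t·φ(t)/2) perfect unordered pairs, giving c(K_{st}) ≥ 2·c(K_s)·c(K_t) for this construction.) -/

import Mathlib

open SimpleGraph

/-- For `s, t ≥ 1`, `k : ZMod s`, `ℓ : ZMod t`, the graph `D k ℓ` on vertex set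
`ZMod s × ZMod t` in which distinct vertices `(i, j)` and `(i', j')` are
adjacent iff `i + i' = k` and `j + j' = ℓ`. -/
def D (s t : ℕ) (k : ZMod s) (ℓ : ZMod t) : SimpleGraph (ZMod s × ZMod t) where
  Adj x y := x ≠ y ∧ x.1 + y.1 = k ∧ x.2 + y.2 = ℓ
  symm := ⟨fun x y ⟨h1, h2, h3⟩ =>
    ⟨h1.symm, by rwa [add_comm], by rwa [add_comm]⟩⟩
  loopless := ⟨fun x ⟨h, _⟩ => h rfl⟩

/-- A graph has a Hamiltonian path if some walk in it is a Hamiltonian path. -/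
def HasHamiltonianPath {V : Type*} [DecidableEq V] (G : SimpleGraph V) : Prop :=
  ∃ (a b : V) (p : G.Walk a b), p.IsHamiltonian



lemma exists_walk_of_chain {V : Type*} {G : SimpleGraph V} :
    ∀ (l : List V) (a : V), List.Chain G.Adj a l → ∃ b, ∃ p : G.Walk a b, p.support = a :: l := by
  intro l
  induction l with
  | nil => exact fun a _ => ⟨a, Walk.nil, rfl⟩
  | cons b l ih =>
    intro a h
    simp only [List.Chain, List.isChain_cons_cons] at h
    obtain ⟨c, p, hp⟩ := ih b h.2
    exact ⟨c, Walk.cons h.1 p, by simp [hp]⟩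

lemma hasHamiltonianPath_of_list {V : Type*} [DecidableEq V] {G : SimpleGraph V}
    (a : V) (l : List V) (hchain : List.Chain G.Adj a l) (hnodup : (a :: l).Nodup)
    (hall : ∀ v : V, v ∈ a :: l) : HasHamiltonianPath G := by
  obtain ⟨b, p, hp⟩ := exists_walk_of_chain l a hchain
  exact ⟨a, b, p, fun v => by rw [hp]; exact List.count_eq_one_of_mem hnodup (hall v)⟩

def eSeq (m : ℕ) : ℤ := if m % 2 = 0 then -((m / 2 : ℕ) : ℤ) else ((m / 2 + 1 : ℕ) : ℤ)

lemma eSeq_add (m : ℕ) : eSeq m + eSeq (m + 1) = if m % 2 = 0 then 1 else 0 := by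
  simp only [eSeq]; split_ifs <;> omega

lemma eSeq_sub (m : ℕ) : eSeq (m + 1) - eSeq m = if m % 2 = 0 then ((m : ℤ) + 1) else -((m : ℤ) + 1) := by
  simp only [eSeq]; split_ifs <;> omega

lemma eSeq_injective : Function.Injective eSeq := by
  intro m m' h
  simp only [eSeq] at h
  split_ifs at h <;> omega

lemma eSeq_abs_lt {n m : ℕ} (hn : n % 2 = 1) (hm : m < n) : 2 * |eSeq m| < n := by
  simp only [eSeq]
  split_ifs with h
  · rw [abs_neg, abs_of_nonneg (by positivity)]; omega
  · rw [abs_of_nonneg (by positivity)]; omega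

lemma zsmul_delta_eq_zero {s t : ℕ} (hco : Nat.Coprime s t)
    {a : ZMod s} {b : ZMod t} (ha : IsUnit a) (hb : IsUnit b) (m : ℤ) :
    m • ((a, b) : ZMod s × ZMod t) = 0 ↔ ((s * t : ℕ) : ℤ) ∣ m := by
  have h1 : ∀ {u : ℕ} (c : ZMod u), IsUnit c → ∀ m : ℤ, (m • c = 0 ↔ ((u : ℤ) ∣ m)) := by
    intro u c hc m
    rw [zsmul_eq_mul, ← ZMod.intCast_zmod_eq_zero_iff_dvd]
    constructor
    · intro h
      rcases hc with ⟨v, rfl⟩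
      have := congrArg (· * (↑v⁻¹ : ZMod u)) h
      simpa [mul_assoc] using this
    · intro h; rw [h, zero_mul]
  rw [Prod.ext_iff]
  simp only [Prod.smul_fst, Prod.smul_snd, Prod.fst_zero, Prod.snd_zero]
  rw [h1 a ha, h1 b hb]
  constructor
  · rintro ⟨h1, h2⟩
    rw [← Int.natAbs_dvd_natAbs] at h1 h2
    have := Nat.Coprime.mul_dvd_of_dvd_of_dvd hco (by simpa using h1) (by simpa using h2)
    exact (Int.natCast_dvd_natCast.mpr this).trans (Int.natAbs_dvd.mpr dvd_rfl)
  · intro h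
    push_cast at h
    exact ⟨(dvd_mul_right (s:ℤ) t).trans h, (dvd_mul_left (t:ℤ) s).trans h⟩

lemma isUnit_two_zmod {s : ℕ} [NeZero s] (hsodd : Odd s) : IsUnit (2 : ZMod s) := by
  have : ((2 : ℕ) : ZMod s) = (2 : ZMod s) := by norm_cast
  rw [← this, ZMod.isUnit_iff_coprime]
  rw [Nat.Prime.coprime_iff_not_dvd Nat.prime_two]
  rw [Nat.odd_iff] at hsodd
  omega

lemma forward_dir {s t : ℕ} (hs : 1 < s) (ht : 1 < t) (hsodd : Odd s) (htodd : Odd t)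
    (hco : Nat.Coprime s t) (k k' : ZMod s) (ℓ ℓ' : ZMod t)
    (hk : IsUnit (k' - k)) (hl : IsUnit (ℓ' - ℓ)) :
    HasHamiltonianPath (D s t k ℓ ⊔ D s t k' ℓ') := by
  haveI : NeZero s := ⟨by omega⟩
  haveI : NeZero t := ⟨by omega⟩
  set n := s * t with hn
  have hn1 : 1 < n := Nat.one_lt_mul_iff.mpr ⟨by omega, by omega, Or.inl hs⟩
  have hnodd : n % 2 = 1 := Nat.odd_iff.mp (hsodd.mul htodd)
  set δ : ZMod s × ZMod t := (k' - k, ℓ' - ℓ) with hδ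
  have hord : ∀ m : ℤ, m • δ = 0 ↔ ((n : ℕ) : ℤ) ∣ m := fun m => zsmul_delta_eq_zero hco hk hl m
  have h2s := ZMod.mul_inv_of_unit _ (isUnit_two_zmod hsodd)
  have h2t := ZMod.mul_inv_of_unit _ (isUnit_two_zmod htodd)
  set f : ZMod s × ZMod t := ((2 : ZMod s)⁻¹ * k, (2 : ZMod t)⁻¹ * ℓ) with hfdef
  have hf : f + f = (k, ℓ) := by
    rw [Prod.ext_iff]
    constructor
    · show (2 : ZMod s)⁻¹ * k + (2 : ZMod s)⁻¹ * k = k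
      calc (2 : ZMod s)⁻¹ * k + (2 : ZMod s)⁻¹ * k = ((2:ZMod s) * (2:ZMod s)⁻¹) * k := by ring
        _ = k := by rw [h2s, one_mul]
    · show (2 : ZMod t)⁻¹ * ℓ + (2 : ZMod t)⁻¹ * ℓ = ℓ
      calc (2 : ZMod t)⁻¹ * ℓ + (2 : ZMod t)⁻¹ * ℓ = ((2:ZMod t) * (2:ZMod t)⁻¹) * ℓ := by ring
        _ = ℓ := by rw [h2t, one_mul]
  set v : ℕ → ZMod s × ZMod t := fun m => f + eSeq m • δ with hv
  -- injectivity on range n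
  have hvinj : ∀ m < n, ∀ m' < n, v m = v m' → m = m' := by
    intro m hm m' hm' h
    have hd : (eSeq m - eSeq m') • δ = 0 := by
      rw [sub_smul]
      simp only [hv] at h
      have := add_left_cancel h
      rw [this, sub_self]
    rw [hord] at hd
    have h1 := eSeq_abs_lt hnodd hm
    have h2 := eSeq_abs_lt hnodd hm'
    have hz : eSeq m - eSeq m' = 0 := by
      by_contra hne
      have := Int.le_of_dvd (abs_pos.mpr hne) ((dvd_abs _ _).mpr hd)
      have habs : |eSeq m - eSeq m'| ≤ |eSeq m| + |eSeq m'| := abs_sub _ _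
      omega
    exact eSeq_injective (by linarith [sub_eq_zero.mp hz])
  -- the sum along edges
  have hsum : ∀ m : ℕ, v m + v (m + 1) = if m % 2 = 0 then (k', ℓ') else (k, ℓ) := by
    intro m
    have : v m + v (m + 1) = (f + f) + (eSeq m + eSeq (m + 1)) • δ := by
      simp only [hv, add_smul]; abel
    rw [this, hf, eSeq_add]
    split_ifs
    · rw [one_smul, hδ, Prod.ext_iff]
      constructor
      · show k + (k' - k) = k'; ring
      · show ℓ + (ℓ' - ℓ) = ℓ'; ring
    · rw [zero_smul, add_zero]
  -- neighbors distinct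
  have hne : ∀ m : ℕ, m + 1 < n → v m ≠ v (m + 1) := by
    intro m hm h
    have hd : (eSeq (m+1) - eSeq m) • δ = 0 := by
      rw [sub_smul]
      simp only [hv] at h
      rw [add_left_cancel h, sub_self]
    rw [hord, eSeq_sub] at hd
    have : ((n:ℕ):ℤ) ∣ ((m:ℤ) + 1) := by
      split_ifs at hd
      · exact hd
      · exact (dvd_neg.mp hd)
    have := Int.le_of_dvd (by positivity) this
    omega
  -- adjacency
  have hadj : ∀ m, m + 1 < n → (D s t k ℓ ⊔ D s t k' ℓ').Adj (v m) (v (m+1)) := by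
    intro m hm
    have hs' := hsum m
    rcases Nat.even_or_odd m with he | ho
    · right
      refine ⟨hne m hm, ?_, ?_⟩
      · have := congrArg Prod.fst hs'
        simpa [Nat.even_iff.mp he] using this
      · have := congrArg Prod.snd hs'
        simpa [Nat.even_iff.mp he] using this
    · left
      refine ⟨hne m hm, ?_, ?_⟩
      · have := congrArg Prod.fst hs'
        simpa [Nat.odd_iff.mp ho] using this
      · have := congrArg Prod.snd hs'
        simpa [Nat.odd_iff.mp ho] using this
  -- assemble the list
  have hcard : Fintype.card (ZMod s × ZMod t) = n := by
    rw [Fintype.card_prod, ZMod.card, ZMod.card]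
  have hranges : List.range n = List.range ((n - 1) + 1) := by congr 1; omega
  have hchain : List.Chain' (D s t k ℓ ⊔ D s t k' ℓ').Adj ((List.range n).map v) := by
    unfold List.Chain'
    rw [List.isChain_map, hranges, List.isChain_range_succ]
    intro m hm
    exact hadj m (by omega)
  have hnodup : ((List.range n).map v).Nodup :=
    List.Nodup.map_on (fun x hx y hy h => hvinj x (List.mem_range.mp hx) y (List.mem_range.mp hy) h)
      (List.nodup_range (n := n))
  have hall : ∀ w : ZMod s × ZMod t, w ∈ (List.range n).map v := by
    have himg : (Finset.range n).image v = Finset.univ := by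
      apply Finset.eq_univ_of_card
      rw [Finset.card_image_of_injOn, Finset.card_range, hcard]
      intro x hx y hy h
      exact hvinj x (Finset.mem_range.mp hx) y (Finset.mem_range.mp hy) h
    intro w
    have : w ∈ (Finset.range n).image v := by rw [himg]; exact Finset.mem_univ w
    obtain ⟨m, hm, rfl⟩ := Finset.mem_image.mp this
    exact List.mem_map.mpr ⟨m, List.mem_range.mpr (Finset.mem_range.mp hm), rfl⟩
  obtain ⟨a, l', hl'⟩ : ∃ a l', (List.range n).map v = a :: l' := by
    cases h : (List.range n).map v with
    | nil => exfalso; have := hall (0,0); rw [h] at this; simp at this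
    | cons a l' => exact ⟨a, l', rfl⟩
  rw [hl'] at hchain hnodup hall
  exact hasHamiltonianPath_of_list a l' hchain hnodup hall

lemma no_ham_aux {V : Type*} [DecidableEq V] {G : SimpleGraph V} {p : ℕ} (hp : 2 < p)
    (ψ : V → ZMod p) (hsurj : Function.Surjective ψ) (c : ZMod p)
    (h : ∀ x y, G.Adj x y → ψ x + ψ y = c) : ¬ HasHamiltonianPath G := by
  rintro ⟨a, b, w, hw⟩
  haveI : NeZero p := ⟨by omega⟩
  have key : ∀ {x y : V} (q : G.Walk x y), ∀ v ∈ q.support, ψ v = ψ x ∨ ψ v + ψ x = c := by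
    intro x y q
    induction q with
    | nil => intro v hv; simp at hv; subst hv; left; rfl
    | @cons x x' y hadj q ih =>
      intro v hv
      rw [SimpleGraph.Walk.support_cons] at hv
      rcases List.mem_cons.mp hv with rfl | hv
      · left; rfl
      · rcases ih v hv with h1 | h1
        · right; rw [h1, add_comm]; exact h _ _ hadj
        · left
          have h2 := h _ _ hadj
          have : ψ v = c - ψ x' := eq_sub_of_add_eq h1
          rw [this, ← h2]; ring
  -- pick a value z avoiding ψ a and c - ψ a
  have hcompl : (({ψ a, c - ψ a} : Finset (ZMod p))ᶜ).Nonempty := by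
    rw [← Finset.card_pos, Finset.card_compl]
    have h2 : ({ψ a, c - ψ a} : Finset (ZMod p)).card ≤ 2 :=
      (Finset.card_insert_le _ _).trans (by simp)
    have : Fintype.card (ZMod p) = p := ZMod.card p
    omega
  obtain ⟨z, hz⟩ := hcompl
  rw [Finset.mem_compl, Finset.mem_insert, Finset.mem_singleton] at hz
  push_neg at hz
  obtain ⟨x0, hx0⟩ := hsurj z
  have hmem : x0 ∈ w.support := by
    have := hw x0
    exact List.count_pos_iff.mp (by omega)
  rcases key w x0 hmem with h1 | h1
  · exact hz.1 (hx0 ▸ h1)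
  · exact hz.2 (by rw [← hx0]; exact eq_sub_of_add_eq h1)

lemma reverse_dir {s t : ℕ} (hs : 1 < s) (ht : 1 < t) (hsodd : Odd s) (htodd : Odd t)
    (k k' : ZMod s) (ℓ ℓ' : ZMod t)
    (hham : HasHamiltonianPath (D s t k ℓ ⊔ D s t k' ℓ')) :
    IsUnit (k' - k) ∧ IsUnit (ℓ' - ℓ) := by
  haveI : NeZero s := ⟨by omega⟩
  haveI : NeZero t := ⟨by omega⟩
  constructor
  · by_contra hu
    have hval : (((k' - k).val : ℕ) : ZMod s) = k' - k := ZMod.natCast_rightInverse _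
    have hg : ¬ Nat.Coprime ((k' - k).val) s := by
      intro hcop
      exact hu (hval ▸ (ZMod.isUnit_iff_coprime _ s).mpr hcop)
    obtain ⟨p, hp, hpg⟩ := Nat.exists_prime_and_dvd hg
    have hps : p ∣ s := hpg.trans (Nat.gcd_dvd_right _ _)
    have hpv : p ∣ (k' - k).val := hpg.trans (Nat.gcd_dvd_left _ _)
    haveI : NeZero p := ⟨hp.ne_zero⟩
    have hp2 : 2 < p := by
      rcases hp.two_le.lt_or_eq with h | h
      · omega
      · exfalso
        rw [Nat.odd_iff] at hsodd
        rw [← h] at hps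
        omega
    set φm := ZMod.castHom hps (ZMod p) with hφm
    have hz : φm (k' - k) = 0 := by
      rw [← hval, map_natCast, ZMod.natCast_eq_zero_iff]
      exact hpv
    refine no_ham_aux hp2 (fun x => φm x.1) ?_ (φm k) ?_ hham
    · intro z
      refine ⟨((z.val : ZMod s), 0), ?_⟩
      show φm ((z.val : ℕ) : ZMod s) = z
      rw [map_natCast]
      exact ZMod.natCast_rightInverse z
    · rintro x y (⟨-, h1, -⟩ | ⟨-, h1, -⟩)
      · rw [← map_add, h1]
      · rw [← map_add, h1]
        have : φm k' = φm k := by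
          have := map_sub φm k' k
          rw [hz] at this
          linear_combination -this
        rw [this]
  · by_contra hu
    have hval : (((ℓ' - ℓ).val : ℕ) : ZMod t) = ℓ' - ℓ := ZMod.natCast_rightInverse _
    have hg : ¬ Nat.Coprime ((ℓ' - ℓ).val) t := by
      intro hcop
      exact hu (hval ▸ (ZMod.isUnit_iff_coprime _ t).mpr hcop)
    obtain ⟨p, hp, hpg⟩ := Nat.exists_prime_and_dvd hg
    have hps : p ∣ t := hpg.trans (Nat.gcd_dvd_right _ _)
    have hpv : p ∣ (ℓ' - ℓ).val := hpg.trans (Nat.gcd_dvd_left _ _)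
    haveI : NeZero p := ⟨hp.ne_zero⟩
    have hp2 : 2 < p := by
      rcases hp.two_le.lt_or_eq with h | h
      · omega
      · exfalso
        rw [Nat.odd_iff] at htodd
        rw [← h] at hps
        omega
    set φm := ZMod.castHom hps (ZMod p) with hφm
    have hz : φm (ℓ' - ℓ) = 0 := by
      rw [← hval, map_natCast, ZMod.natCast_eq_zero_iff]
      exact hpv
    refine no_ham_aux hp2 (fun x => φm x.2) ?_ (φm ℓ) ?_ hham
    · intro z
      refine ⟨(0, (z.val : ZMod t)), ?_⟩
      show φm ((z.val : ℕ) : ZMod t) = z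
      rw [map_natCast]
      exact ZMod.natCast_rightInverse z
    · rintro x y (⟨-, -, h1⟩ | ⟨-, -, h1⟩)
      · rw [← map_add, h1]
      · rw [← map_add, h1]
        have : φm ℓ' = φm ℓ := by
          have := map_sub φm ℓ' ℓ
          rw [hz] at this
          linear_combination -this
        rw [this]

def shuffleEquiv {A B : Type*} (P : A → A → Prop) (Q : B → B → Prop) :
    {q : (A × B) × (A × B) // P q.1.1 q.2.1 ∧ Q q.1.2 q.2.2} ≃
      ({p : A × A // P p.1 p.2} × {p : B × B // Q p.1 p.2}) where
  toFun q := (⟨(q.1.1.1, q.1.2.1), q.2.1⟩, ⟨(q.1.1.2, q.1.2.2), q.2.2⟩)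
  invFun x := ⟨((x.1.1.1, x.2.1.1), (x.1.1.2, x.2.1.2)), x.1.2, x.2.2⟩
  left_inv q := rfl
  right_inv x := rfl

noncomputable def unitPairEquiv (u : ℕ) : {p : ZMod u × ZMod u // IsUnit (p.2 - p.1)} ≃ (ZMod u × (ZMod u)ˣ) where
  toFun p := (p.1.1, p.2.unit)
  invFun x := ⟨(x.1, x.1 + x.2), by simp⟩
  left_inv p := by
    apply Subtype.ext
    exact Prod.ext rfl (by simp [p.2.unit_spec])
  right_inv x := by
    refine Prod.ext rfl (Units.ext ?_)
    simp

theorem stmt_13 (s t : ℕ) (hs : 1 < s) (ht : 1 < t)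
    (hsodd : Odd s) (htodd : Odd t) (hco : Nat.Coprime s t) :
    Nat.card {q : (ZMod s × ZMod t) × (ZMod s × ZMod t) //
        q.1 ≠ q.2 ∧ HasHamiltonianPath (D s t q.1.1 q.1.2 ⊔ D s t q.2.1 q.2.2)} =
      (s * Nat.totient s) * (t * Nat.totient t) := by
  haveI : NeZero s := ⟨by omega⟩
  haveI : NeZero t := ⟨by omega⟩
  haveI : Fact (1 < s) := ⟨hs⟩
  have hiff : ∀ q : (ZMod s × ZMod t) × (ZMod s × ZMod t),
      (q.1 ≠ q.2 ∧ HasHamiltonianPath (D s t q.1.1 q.1.2 ⊔ D s t q.2.1 q.2.2)) ↔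
      (IsUnit (q.2.1 - q.1.1) ∧ IsUnit (q.2.2 - q.1.2)) := by
    intro q
    constructor
    · rintro ⟨-, hham⟩
      exact reverse_dir hs ht hsodd htodd _ _ _ _ hham
    · rintro ⟨h1, h2⟩
      refine ⟨?_, forward_dir hs ht hsodd htodd hco _ _ _ _ h1 h2⟩
      intro he
      rw [he, sub_self] at h1
      exact zero_ne_one (isUnit_zero_iff.mp h1)
  rw [Nat.card_congr (Equiv.subtypeEquivRight hiff)]
  rw [Nat.card_congr (shuffleEquiv (fun a a' => IsUnit (a' - a)) (fun b b' => IsUnit (b' - b)))]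
  rw [Nat.card_prod]
  rw [Nat.card_congr (unitPairEquiv s), Nat.card_congr (unitPairEquiv t)]
  rw [Nat.card_prod, Nat.card_prod]
  rw [Nat.card_eq_fintype_card, Nat.card_eq_fintype_card, Nat.card_eq_fintype_card,
    Nat.card_eq_fintype_card]
  rw [ZMod.card, ZMod.card, ZMod.card_units_eq_totient, ZMod.card_units_eq_totient]
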